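/- arXiv:1906.07813 — 5 statements merged into one kernel-verified Lean document; each statement's English description precedes it below -/
import Mathlib

section
/- The Study quadric is invariant under multiplication by elements of 𝔻ₛ: if a dual quaternion σ = p + εq has Study coordinates satisfying x₀y₀ + x₁y₁ + x₂y₂ + x₃y₃ = 0, and τ ∈ 𝔻ₛ (i.e. τ has nonzero primal part and ττ* is a nonnegative real), then both products στ and τσ also have Study coordinates satisfying the Study equation. -/
open Quaternion

noncomputable section

/-- The ℝ-algebra of dual quaternions `𝔻 = ℍ + εℍ` with `ε² = 0`. -/
abbrev 𝔻 := DualNumber ℍ[ℝ]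

/-- The dual quaternion `p + εq`. -/
def dq (p q : ℍ[ℝ]) : 𝔻 := (p, q)

/-- The conjugate `σ* = p* + εq*` of a dual quaternion `σ = p + εq`. -/
def dconj (σ : 𝔻) : 𝔻 := dq (star σ.fst) (star σ.snd)

/-- The Study equation `x₀y₀ + x₁y₁ + x₂y₂ + x₃y₃ = 0` in the Study coordinates of a dual
quaternion `σ = p + εq`. -/
def studyEq (σ : 𝔻) : Prop :=
  σ.fst.re * σ.snd.re + σ.fst.imI * σ.snd.imI + σ.fst.imJ * σ.snd.imJ
    + σ.fst.imK * σ.snd.imK = 0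

/-- The Study quadric is invariant under multiplication by elements of `𝔻ₛ`: if a dual
quaternion `σ` satisfies the Study equation and `τ ∈ 𝔻ₛ` (i.e. `τ` has nonzero primal part
and `ττ*` is a nonnegative real), then both `στ` and `τσ` also satisfy the Study equation. -/
theorem stmt5 (σ τ : 𝔻) (hσ : studyEq σ) (hτ₁ : τ.fst ≠ 0)
    (hτ₂ : ∃ r : ℝ, 0 ≤ r ∧ τ * dconj τ = algebraMap ℝ 𝔻 r) :
    studyEq (σ * τ) ∧ studyEq (τ * σ) := by
  obtain ⟨r, -, heq⟩ := hτ₂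
  have hsnd : (τ * dconj τ).snd = 0 := by
    rw [heq, TrivSqZeroExt.algebraMap_eq_inl' ℝ, TrivSqZeroExt.snd_inl]
  have hτ : studyEq τ := by
    have h := congrArg QuaternionAlgebra.re hsnd
    rw [TrivSqZeroExt.snd_mul] at h
    simp only [TrivSqZeroExt.snd_mul, dconj, dq, TrivSqZeroExt.fst_mk, TrivSqZeroExt.snd_mk,
      smul_eq_mul, MulOpposite.smul_eq_mul_unop, MulOpposite.unop_op,
      Quaternion.re_add, Quaternion.re_mul, Quaternion.re_zero,
      Quaternion.re_star, Quaternion.imI_star, Quaternion.imJ_star, Quaternion.imK_star] at h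
    unfold studyEq
    nlinarith [h]
  unfold studyEq at *
  constructor <;>
  · simp only [TrivSqZeroExt.fst_mul, TrivSqZeroExt.snd_mul, smul_eq_mul,
      MulOpposite.smul_eq_mul_unop, MulOpposite.unop_op,
      Quaternion.re_add, Quaternion.imI_add, Quaternion.imJ_add, Quaternion.imK_add,
      Quaternion.re_mul, Quaternion.imI_mul, Quaternion.imJ_mul, Quaternion.imK_mul]
    linear_combination (σ.fst.re^2 + σ.fst.imI^2 + σ.fst.imJ^2 + σ.fst.imK^2) * hτ
      + (τ.fst.re^2 + τ.fst.imI^2 + τ.fst.imJ^2 + τ.fst.imK^2) * hσ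
end
end

section
/- For all real parameters v, d, a, l, the Denavit–Hartenberg dual quaternion σ(v, d, a, l) := (1 + v·k)(1 + ε(d/2)·k)(1 + ε(a/2)·i)(1 + l·i) satisfies σσ* = (1 + v²)(1 + l²) (a positive real number); in particular σ ∈ 𝔻ₛ and its Study coordinates satisfy the Study equation x₀y₀ + x₁y₁ + x₂y₂ + x₃y₃ = 0 with x₀² + x₁² + x₂² + x₃² ≠ 0. -/
open Quaternion

noncomputable section

/-- The quaternion unit `i`. -/
def iq : ℍ[ℝ] := ⟨0, 1, 0, 0⟩

/-- The quaternion unit `k`. -/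
def kq : ℍ[ℝ] := ⟨0, 0, 0, 1⟩

/-- `R_z(v) = 1 + v·k`, rotation about the z-axis with half-angle tangent `v`. -/
def Rz (v : ℝ) : 𝔻 := dq (1 + v • kq) 0

/-- `R_x(l) = 1 + l·i`, rotation about the x-axis with half-angle tangent `l`. -/
def Rx (l : ℝ) : 𝔻 := dq (1 + l • iq) 0

/-- `T_z(d) = 1 + ε(d/2)·k`, translation by `d` along the z-axis. -/
def Tz (d : ℝ) : 𝔻 := dq 1 ((d / 2) • kq)

/-- `T_x(a) = 1 + ε(a/2)·i`, translation by `a` along the x-axis. -/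
def Tx (a : ℝ) : 𝔻 := dq 1 ((a / 2) • iq)

lemma fst_sigma (v d a l : ℝ) :
    (Rz v * Tz d * Tx a * Rx l).fst = ⟨1, l, v * l, v⟩ := by
  simp only [Rz, Tz, Tx, Rx, TrivSqZeroExt.fst_mul]
  simp only [dq, dconj, TrivSqZeroExt.fst_mk]
  ext <;> simp [Quaternion.ext_iff, ← Quaternion.coe_pow] <;> simp [iq, kq] <;> ring

lemma snd_sigma (v d a l : ℝ) :
    (Rz v * Tz d * Tx a * Rx l).snd =
      ⟨-(v*d/2) - l*a/2, a/2 - l*v*d/2, v*a/2 + l*d/2, d/2 - l*v*a/2⟩ := by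
  simp only [Rz, Tz, Tx, Rx, TrivSqZeroExt.fst_mul, TrivSqZeroExt.snd_mul]
  simp only [dq, dconj, TrivSqZeroExt.fst_mk, TrivSqZeroExt.snd_mk,
    smul_eq_mul, MulOpposite.smul_eq_mul_unop, MulOpposite.unop_op, smul_zero,
    zero_add, add_zero, mul_one, one_mul]
  ext <;> simp [Quaternion.ext_iff, ← Quaternion.coe_pow] <;> simp [iq, kq] <;> ring

/-- For all real `v, d, a, l`, the Denavit–Hartenberg dual quaternion
`σ(v,d,a,l) = R_z(v)T_z(d)T_x(a)R_x(l)` satisfies `σσ* = (1+v²)(1+l²)` (a positive real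
number); in particular `σ ∈ 𝔻ₛ` and its Study coordinates satisfy the Study equation
`x₀y₀ + x₁y₁ + x₂y₂ + x₃y₃ = 0` with `x₀² + x₁² + x₂² + x₃² ≠ 0`. -/
theorem stmt6 (v d a l : ℝ) (σ : 𝔻) (hσ : σ = Rz v * Tz d * Tx a * Rx l) :
    σ * dconj σ = algebraMap ℝ 𝔻 ((1 + v ^ 2) * (1 + l ^ 2)) ∧
    (0 : ℝ) < (1 + v ^ 2) * (1 + l ^ 2) ∧
    (σ.fst ≠ 0 ∧ ∃ r : ℝ, 0 ≤ r ∧ σ * dconj σ = algebraMap ℝ 𝔻 r) ∧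
    σ.fst.re * σ.snd.re + σ.fst.imI * σ.snd.imI + σ.fst.imJ * σ.snd.imJ
        + σ.fst.imK * σ.snd.imK = 0 ∧
    σ.fst.re ^ 2 + σ.fst.imI ^ 2 + σ.fst.imJ ^ 2 + σ.fst.imK ^ 2 ≠ 0 := by
  subst hσ
  have hpos : (0:ℝ) < (1 + v ^ 2) * (1 + l ^ 2) := by positivity
  have hf := fst_sigma v d a l
  have hs := snd_sigma v d a l
  have hmain : (Rz v * Tz d * Tx a * Rx l) * dconj (Rz v * Tz d * Tx a * Rx l)
      = algebraMap ℝ 𝔻 ((1 + v ^ 2) * (1 + l ^ 2)) := by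
    have hf' : ∀ x : ℍ[ℝ], x = (Rz v * Tz d * Tx a * Rx l).fst → x.re = 1 ∧ x.imI = l ∧ x.imJ = v * l ∧ x.imK = v := by
      intro x hx; rw [hx, hf]; exact ⟨rfl, rfl, rfl, rfl⟩
    have hs' : ∀ x : ℍ[ℝ], x = (Rz v * Tz d * Tx a * Rx l).snd → x.re = -(v*d/2) - l*a/2 ∧ x.imI = a/2 - l*v*d/2 ∧ x.imJ = v*a/2 + l*d/2 ∧ x.imK = d/2 - l*v*a/2 := by
      intro x hx; rw [hx, hs]; exact ⟨rfl, rfl, rfl, rfl⟩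
    obtain ⟨f0, f1, f2, f3⟩ := hf' _ rfl
    obtain ⟨s0, s1, s2, s3⟩ := hs' _ rfl
    clear hf' hs' hf hs
    generalize Rz v * Tz d * Tx a * Rx l = σ at f0 f1 f2 f3 s0 s1 s2 s3 ⊢
    refine TrivSqZeroExt.ext ?_ ?_
    · rw [TrivSqZeroExt.fst_mul]
      simp only [dconj, dq, TrivSqZeroExt.fst_mk,
        TrivSqZeroExt.fst_inl]
      rw [show ((algebraMap ℝ 𝔻) ((1 + v ^ 2) * (1 + l ^ 2))).fst
          = algebraMap ℝ ℍ[ℝ] ((1 + v ^ 2) * (1 + l ^ 2)) from rfl]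
      ext <;> simp [Quaternion.ext_iff, ← Quaternion.coe_pow, f0, f1, f2, f3, s0, s1, s2, s3] <;> ring
    · rw [TrivSqZeroExt.snd_mul]
      simp only [dconj, dq, TrivSqZeroExt.fst_mk,
        TrivSqZeroExt.snd_mk, smul_eq_mul, MulOpposite.smul_eq_mul_unop,
        MulOpposite.unop_op]
      rw [show ((algebraMap ℝ 𝔻) ((1 + v ^ 2) * (1 + l ^ 2))).snd = 0 from rfl]
      ext <;> simp [Quaternion.ext_iff, ← Quaternion.coe_pow, f0, f1, f2, f3, s0, s1, s2, s3] <;> ring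
  refine ⟨hmain, hpos, ⟨?_, (1 + v ^ 2) * (1 + l ^ 2), hpos.le, hmain⟩, ?_, ?_⟩
  · rw [hf]; intro h; simpa using congrArg QuaternionAlgebra.re h
  · rw [hf, hs]; simp; ring
  · rw [hf]; simp; positivity
end
end

section
/- For all real v₂, d₃, a₂, l₂, the Study coordinates (x₀, x₁, x₂, x₃, y₀, y₁, y₂, y₃) of the dual quaternion (1 + v₂·k)(1 + ε(a₂/2)·i)(1 + l₂·i)(1 + ε(d₃/2)·k) satisfy the four linear equations: −l₂x₀ + x₁ = 0; a₂(l₂² − 1)x₀ + 2l₂y₀ + 2y₁ = 0; a₂(l₂² − 1)x₃ + 2y₂ + 2l₂y₃ = 0; x₂ − l₂x₃ = 0. That is, the kinematic image V₁ of the 2-chain R_z(v₂)T_x(a₂)R_x(l₂)T_z(d₃) (an RP chain with joint variables v₂, d₃) is contained in the linear 3-space defined by these equations. -/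
open Quaternion

noncomputable section

/-- For all real `v₂, d₃, a₂, l₂`, the Study coordinates of the dual quaternion
`R_z(v₂)T_x(a₂)R_x(l₂)T_z(d₃)` satisfy the four linear equations `−l₂x₀ + x₁ = 0`,
`a₂(l₂² − 1)x₀ + 2l₂y₀ + 2y₁ = 0`, `a₂(l₂² − 1)x₃ + 2y₂ + 2l₂y₃ = 0`, `x₂ − l₂x₃ = 0`;
that is, the kinematic image of the RP 2-chain is contained in the linear 3-space defined by
these equations. -/
theorem stmt8 (v₂ d₃ a₂ l₂ : ℝ) (σ : 𝔻) (hσ : σ = Rz v₂ * Tx a₂ * Rx l₂ * Tz d₃) :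
    -l₂ * σ.fst.re + σ.fst.imI = 0 ∧
    a₂ * (l₂ ^ 2 - 1) * σ.fst.re + 2 * l₂ * σ.snd.re + 2 * σ.snd.imI = 0 ∧
    a₂ * (l₂ ^ 2 - 1) * σ.fst.imK + 2 * σ.snd.imJ + 2 * l₂ * σ.snd.imK = 0 ∧
    σ.fst.imJ - l₂ * σ.fst.imK = 0 := by
  subst hσ
  have hf : ∀ p q, (dq p q).fst = p := fun _ _ => rfl
  have hs : ∀ p q, (dq p q).snd = q := fun _ _ => rfl
  simp only [Rz, Rx, Tz, Tx, hf, hs, TrivSqZeroExt.fst_mul, TrivSqZeroExt.snd_mul,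
    TrivSqZeroExt.fst_mk, TrivSqZeroExt.snd_mk, op_smul_eq_mul,
    mul_zero, zero_mul, add_zero, zero_add, smul_zero, mul_one, one_mul]
  simp only [ Quaternion.re_mul, Quaternion.imI_mul, Quaternion.imJ_mul,
    Quaternion.imK_mul, Quaternion.re_add, Quaternion.imI_add, Quaternion.imJ_add,
    Quaternion.imK_add, Quaternion.re_smul, Quaternion.imI_smul, Quaternion.imJ_smul,
    Quaternion.imK_smul, Quaternion.re_one, Quaternion.imI_one, Quaternion.imJ_one,
    Quaternion.imK_one, smul_eq_mul]
  simp only [iq, kq]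
  refine ⟨by ring, by ring, by ring, by ring⟩
end
end

section
/- Fix real numbers a₁ and l₁ with (a₁, l₁) ≠ (0, 0). Every tuple (x₀, x₁, x₂, x₃, y₀, y₁, y₂, y₃) ∈ ℝ⁸ satisfying the four linear equations a₁l₁x₀ + 2y₀ = 0, −a₁x₁ + 2l₁y₁ = 0, −a₁x₂ + 2l₁y₂ = 0, a₁l₁x₃ + 2y₃ = 0 also satisfies the Study equation x₀y₀ + x₁y₁ + x₂y₂ + x₃y₃ = 0 if and only if a₁ = 0 or l₁ = 0. That is, the linear 3-space containing the workspace of the RR chain lies in the Study quadric S exactly when a₁ or l₁ vanishes. -/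
/-- Fix real numbers `a₁` and `l₁` with `(a₁, l₁) ≠ (0, 0)`.  Every tuple
`(x₀,…,x₃,y₀,…,y₃) ∈ ℝ⁸` satisfying the four linear equations `a₁l₁x₀ + 2y₀ = 0`,
`−a₁x₁ + 2l₁y₁ = 0`, `−a₁x₂ + 2l₁y₂ = 0`, `a₁l₁x₃ + 2y₃ = 0` also satisfies the Study
equation `x₀y₀ + x₁y₁ + x₂y₂ + x₃y₃ = 0` if and only if `a₁ = 0` or `l₁ = 0`; that is, the
linear 3-space containing the workspace of the RR chain lies in the Study quadric exactly
when `a₁` or `l₁` vanishes. -/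
theorem stmt11 (a₁ l₁ : ℝ) (h : (a₁, l₁) ≠ (0, 0)) :
    (∀ x₀ x₁ x₂ x₃ y₀ y₁ y₂ y₃ : ℝ,
        a₁ * l₁ * x₀ + 2 * y₀ = 0 →
        -a₁ * x₁ + 2 * l₁ * y₁ = 0 →
        -a₁ * x₂ + 2 * l₁ * y₂ = 0 →
        a₁ * l₁ * x₃ + 2 * y₃ = 0 →
        x₀ * y₀ + x₁ * y₁ + x₂ * y₂ + x₃ * y₃ = 0) ↔ (a₁ = 0 ∨ l₁ = 0) := by
  constructor
  · intro H
    by_contra hc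
    push_neg at hc
    obtain ⟨ha, hl⟩ := hc
    have := H 1 (2*l₁) 0 0 (-(a₁*l₁)/2) a₁ 0 0 (by ring) (by ring) (by ring) (by ring)
    have : a₁ * l₁ = 0 := by nlinarith [this]
    rcases mul_eq_zero.mp this with h1 | h1 <;> [exact ha h1; exact hl h1]
  · rintro (rfl | rfl) <;> intro x₀ x₁ x₂ x₃ y₀ y₁ y₂ y₃ e0 e1 e2 e3
    · have hl : l₁ ≠ 0 := by simpa using h
      have hy0 : y₀ = 0 := by linarith
      have hy3 : y₃ = 0 := by linarith
      have hy1 : y₁ = 0 := by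
        rcases mul_eq_zero.mp (show l₁ * y₁ = 0 by linarith) with h'|h'
        · exact absurd h' hl
        · exact h'
      have hy2 : y₂ = 0 := by
        rcases mul_eq_zero.mp (show l₁ * y₂ = 0 by linarith) with h'|h'
        · exact absurd h' hl
        · exact h'
      subst hy0 hy1 hy2 hy3; ring
    · have ha : a₁ ≠ 0 := by simpa using h
      have hx1 : x₁ = 0 := by
        rcases mul_eq_zero.mp (by linarith : a₁ * x₁ = 0) with h'|h'; exact absurd h' ha; exact h'
      have hx2 : x₂ = 0 := by
        rcases mul_eq_zero.mp (by linarith : a₁ * x₂ = 0) with h'|h'; exact absurd h' ha; exact h'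
      have hy0 : y₀ = 0 := by linarith
      have hy3 : y₃ = 0 := by linarith
      subst hx1 hx2 hy0 hy3; ring
end

section
/- For all real a₂, l₂, the 4×8 real matrix A = [[0,0,0,0,−2,2l₂,0,0],[0,0,4l₂,4,0,0,2a₂,−2a₂l₂],[0,0,0,0,0,0,−2l₂,2],[4,4l₂,0,0,−2a₂l₂,2a₂,0,0]] has rank 4, and its kernel is exactly the linear span of the four vectors (−l₂,1,0,0,0,0,0,0), (a₂(l₂²−1),0,0,0,2l₂,2,0,0), (0,0,0,a₂(l₂²−1),0,0,2,2l₂), and (0,0,1,−l₂,0,0,0,0) in ℝ⁸. -/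
private lemma vec8_five {α : Type*} (a b c d e f g h : α) :
    (![a, b, c, d, e, f, g, h] : Fin 8 → α) 5 = f := rfl

private lemma vec8_six {α : Type*} (a b c d e f g h : α) :
    (![a, b, c, d, e, f, g, h] : Fin 8 → α) 6 = g := rfl

private lemma vec8_seven {α : Type*} (a b c d e f g h : α) :
    (![a, b, c, d, e, f, g, h] : Fin 8 → α) 7 = h := rfl

/-- For all real `a₂, l₂`, the 4×8 real matrix
`A = [[0,0,0,0,−2,2l₂,0,0],[0,0,4l₂,4,0,0,2a₂,−2a₂l₂],[0,0,0,0,0,0,−2l₂,2],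
[4,4l₂,0,0,−2a₂l₂,2a₂,0,0]]` has rank 4, and its kernel is exactly the linear span of the
four vectors `(−l₂,1,0,0,0,0,0,0)`, `(a₂(l₂²−1),0,0,0,2l₂,2,0,0)`,
`(0,0,0,a₂(l₂²−1),0,0,2,2l₂)` and `(0,0,1,−l₂,0,0,0,0)` in `ℝ⁸`. -/
theorem stmt13 (a₂ l₂ : ℝ)
    (A : Matrix (Fin 4) (Fin 8) ℝ)
    (hA : A = !![0, 0, 0, 0, -2, 2 * l₂, 0, 0;
                 0, 0, 4 * l₂, 4, 0, 0, 2 * a₂, -2 * a₂ * l₂;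
                 0, 0, 0, 0, 0, 0, -2 * l₂, 2;
                 4, 4 * l₂, 0, 0, -2 * a₂ * l₂, 2 * a₂, 0, 0]) :
    A.rank = 4 ∧
    LinearMap.ker A.mulVecLin = Submodule.span ℝ
      {![-l₂, 1, 0, 0, 0, 0, 0, 0],
       ![a₂ * (l₂ ^ 2 - 1), 0, 0, 0, 2 * l₂, 2, 0, 0],
       ![0, 0, 0, a₂ * (l₂ ^ 2 - 1), 0, 0, 2, 2 * l₂],
       ![0, 0, 1, -l₂, 0, 0, 0, 0]} := by
  classical
  have hker : LinearMap.ker A.mulVecLin = Submodule.span ℝ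
      ({![-l₂, 1, 0, 0, 0, 0, 0, 0],
       ![a₂ * (l₂ ^ 2 - 1), 0, 0, 0, 2 * l₂, 2, 0, 0],
       ![0, 0, 0, a₂ * (l₂ ^ 2 - 1), 0, 0, 2, 2 * l₂],
       ![0, 0, 1, -l₂, 0, 0, 0, 0]} : Set (Fin 8 → ℝ)) := by
    apply le_antisymm
    · intro x hx
      have hx' : A.mulVec x = 0 := hx
      have h0 := congrFun hx' 0
      have h1 := congrFun hx' 1
      have h2 := congrFun hx' 2
      have h3 := congrFun hx' 3
      simp only [hA, Matrix.mulVec, dotProduct, Fin.sum_univ_eight,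
        Matrix.cons_val', Matrix.cons_val_zero, Matrix.cons_val_one, Matrix.head_cons,
        Matrix.empty_val', Matrix.cons_val_fin_one, Matrix.head_fin_const,
        Matrix.cons_val_two, Matrix.tail_cons, Matrix.cons_val_three, Matrix.cons_val_four,
        vec8_five, vec8_six, vec8_seven, Pi.zero_apply, Matrix.of_apply] at h0 h1 h2 h3
      have hx_eq : x = x 1 • ![-l₂, 1, 0, 0, 0, 0, 0, 0]
          + (x 5 / 2) • ![a₂ * (l₂ ^ 2 - 1), 0, 0, 0, 2 * l₂, 2, 0, 0]
          + (x 6 / 2) • ![0, 0, 0, a₂ * (l₂ ^ 2 - 1), 0, 0, 2, 2 * l₂]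
          + x 2 • ![0, 0, 1, -l₂, 0, 0, 0, 0] := by
        funext i
        fin_cases i <;> simp [vec8_five, vec8_six, vec8_seven]
        · linear_combination (1/4) * h3 - (a₂ * l₂ / 4) * h0
        · linear_combination (1/4) * h1 + (a₂ * l₂ / 4) * h2
        · linear_combination (-1/2) * h0
        · linear_combination (1/2) * h2
      rw [hx_eq]
      refine Submodule.add_mem _ (Submodule.add_mem _ (Submodule.add_mem _ ?_ ?_) ?_) ?_ <;>
        apply Submodule.smul_mem <;> apply Submodule.subset_span <;> simp
    · rw [Submodule.span_le]
      rintro y (rfl | rfl | rfl | rfl) <;>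
      · refine LinearMap.mem_ker.mpr ?_
        show A.mulVec _ = 0
        funext i
        fin_cases i <;>
          simp [hA, Matrix.mulVec, dotProduct, Fin.sum_univ_eight,
            vec8_five, vec8_six, vec8_seven] <;>
          ring
  refine ⟨?_, hker⟩
  have hle : A.rank ≤ 4 := by simpa using A.rank_le_card_height
  have hd : Module.finrank ℝ (LinearMap.ker A.mulVecLin) ≤ 4 := by
    rw [hker]
    refine (finrank_span_le_card _).trans ?_
    rw [Set.toFinset_insert, Set.toFinset_insert, Set.toFinset_insert, Set.toFinset_singleton]
    refine (Finset.card_insert_le _ _).trans (Nat.succ_le_succ ?_)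
    refine (Finset.card_insert_le _ _).trans (Nat.succ_le_succ ?_)
    refine (Finset.card_insert_le _ _).trans (Nat.succ_le_succ ?_)
    simp
  have hrn := LinearMap.finrank_range_add_finrank_ker A.mulVecLin
  rw [Module.finrank_pi] at hrn
  have hr : A.rank = Module.finrank ℝ (LinearMap.range A.mulVecLin) := rfl
  simp only [Fintype.card_fin] at hrn
  omega
end
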